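/- Let R, f be smooth functions on a Riemannian 3-manifold (part of a steady soliton with R+|∇f|²=1), ψ smooth satisfying the ODE 0 = -(3/4)ψ² + ψ - s² + sψ - (1-s)ψψ', and u(s) = log ψ(s) + ∫_{1/2}^s (3/(2(1-t)) - 1/((1-t)ψ(t))) dt. Then with X = ∇R + ψ(R)∇f, one has (1-R)·e^{-u(R)}·div(e^{u(R)}X) = -|B|² - (R(R-ψ(R))/ψ(R)²)·|X|². -/

import Mathlib

open intervalIntegral

/-- On a 3-dimensional steady gradient Ricci soliton with 0 < R < 1,
normalized by R + |∇f|² = 1, with ψ positive smooth solving the ODE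
0 = -(3/4)ψ² + ψ - s² + sψ - (1-s)ψψ' and
u(s) = log ψ(s) + ∫_{1/2}^s (3/(2(1-t)) - 1/((1-t)ψ(t))) dt, the vector field
X = ∇R + ψ(R)∇f satisfies
(1-R)e^{-u(R)}div(e^{u(R)}X) = -|B|² - (R(R-ψ(R))/ψ(R)²)|X|².
We work in components w.r.t. an orthonormal frame; the previously established identity
(1-R)div X = -|B|² - (3/4)⟨∇R - ψ(R)∇f, X⟩ - ⟨∇f,X⟩ + (1-R)ψ'(R)⟨∇f,X⟩, the
expansion div(e^{u(R)}X) = e^{u(R)}(div X + u'(R)⟨∇R,X⟩) with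
u'(s) = ψ'(s)/ψ(s) + 3/(2(1-s)) - 1/((1-s)ψ(s)), and the normalization may be
assumed, as allowed. -/
theorem stmt_8 {M : Type*}
    (R divX divEuX : M → ℝ) (ψ ψ' : ℝ → ℝ)
    (hψderiv : ∀ s ∈ Set.Ioo (0:ℝ) 1, HasDerivAt ψ (ψ' s) s)
    (hψpos : ∀ s ∈ Set.Ioo (0:ℝ) 1, 0 < ψ s)
    (hode : ∀ s ∈ Set.Ioo (0:ℝ) 1,
      0 = -(3/4) * (ψ s)^2 + ψ s - s^2 + s * ψ s - (1 - s) * ψ s * ψ' s)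
    (u : ℝ → ℝ)
    (hu : ∀ s ∈ Set.Ioo (0:ℝ) 1, u s = Real.log (ψ s)
      + ∫ t in (1/2:ℝ)..s, (3 / (2 * (1 - t)) - 1 / ((1 - t) * ψ t)))
    (Ric : M → Fin 3 → Fin 3 → ℝ)
    (gradf gradR : M → Fin 3 → ℝ)
    (hRicSymm : ∀ x i j, Ric x i j = Ric x j i)
    (hgradR : ∀ x i, gradR x i = -2 * ∑ j, Ric x i j * gradf x j)
    (hR : ∀ x : M, R x ∈ Set.Ioo (0:ℝ) 1)
    (hnorm : ∀ x, R x + ∑ i, (gradf x i)^2 = 1)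
    (B : M → Fin 3 → Fin 3 → Fin 3 → ℝ)
    (hB : ∀ x i j k, B x i j k = Ric x i k * gradf x j - Ric x i j * gradf x k
      - (1/4) * ((gradR x j + 2 * R x * gradf x j) * (if i = k then (1:ℝ) else 0)
        - (gradR x k + 2 * R x * gradf x k) * (if i = j then (1:ℝ) else 0)))
    (X : M → Fin 3 → ℝ)
    (hX : ∀ x i, X x i = gradR x i + ψ (R x) * gradf x i)
    (hdivX : ∀ x, (1 - R x) * divX x
      = -(∑ i, ∑ j, ∑ k, (B x i j k)^2)
        - (3/4) * (∑ i, (gradR x i - ψ (R x) * gradf x i) * X x i)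
        - (∑ i, gradf x i * X x i)
        + (1 - R x) * ψ' (R x) * (∑ i, gradf x i * X x i))
    (hdivEuX : ∀ x, divEuX x = Real.exp (u (R x)) * (divX x
      + (ψ' (R x) / ψ (R x) + 3 / (2 * (1 - R x)) - 1 / ((1 - R x) * ψ (R x)))
        * ∑ i, gradR x i * X x i)) :
    ∀ x, (1 - R x) * Real.exp (-(u (R x))) * divEuX x
      = -(∑ i, ∑ j, ∑ k, (B x i j k)^2)
        - (R x * (R x - ψ (R x)) / (ψ (R x))^2) * (∑ i, (X x i)^2) := by
  intro x
  obtain ⟨h0, h1⟩ := hR x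
  have hp : 0 < ψ (R x) := hψpos _ (hR x)
  have hs1 : (0:ℝ) < 1 - R x := by linarith
  have hodeX := hode (R x) (hR x)
  have hE : Real.exp (-(u (R x))) * Real.exp (u (R x)) = 1 := by
    rw [← Real.exp_add]; norm_num
  have hA : ∑ i, gradR x i * X x i
      = (∑ i, (X x i)^2) - ψ (R x) * ∑ i, gradf x i * X x i := by
    rw [Finset.mul_sum, ← Finset.sum_sub_distrib]
    refine Finset.sum_congr rfl fun i _ => ?_
    rw [hX]; ring
  have hA2 : ∑ i, (gradR x i - ψ (R x) * gradf x i) * X x i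
      = (∑ i, (X x i)^2) - 2 * ψ (R x) * ∑ i, gradf x i * X x i := by
    rw [Finset.mul_sum, ← Finset.sum_sub_distrib]
    refine Finset.sum_congr rfl fun i _ => ?_
    rw [hX]; ring
  have key : (1 - R x) * Real.exp (-(u (R x))) * divEuX x
      = (1 - R x) * divX x
        + (1 - R x) * (ψ' (R x) / ψ (R x) + 3 / (2 * (1 - R x))
            - 1 / ((1 - R x) * ψ (R x))) * ∑ i, gradR x i * X x i := by
    rw [hdivEuX x]
    linear_combination ((1 - R x) * (divX x
      + (ψ' (R x) / ψ (R x) + 3 / (2 * (1 - R x)) - 1 / ((1 - R x) * ψ (R x)))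
        * ∑ i, gradR x i * X x i)) * hE
  rw [key, hdivX x, hA, hA2]
  field_simp
  linear_combination (8 * ∑ i, (X x i)^2) * hodeX
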